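/- Data processing inequality for conditional Rényi entropy: if X − Y − Z form a Markov chain on finite sets and α ∈ (1,∞), then H̃_α(X|Y) ≤ H̃_α(X|Z), where H̃_α(X|W) = (1/(1-α)) log(∑_w p(w) ∑_x p(x|w)^α). -/

import Mathlib

/-- Data processing inequality for the conditional Rényi entropy: if `X − Y − Z`
is a Markov chain and `α ∈ (1, ∞)`, then `H̃_α(X|Y) ≤ H̃_α(X|Z)`. -/
theorem cond_renyi_data_processing {X Y Z : Type*} [Fintype X] [Fintype Y] [Fintype Z]
    (pY : Y → ℝ) (a : Y → X → ℝ) (c : Y → Z → ℝ)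
    (hpY : ∀ y, 0 ≤ pY y) (hpYs : ∑ y, pY y = 1)
    (ha : ∀ y x, 0 ≤ a y x) (has : ∀ y, ∑ x, a y x = 1)
    (hc : ∀ y z, 0 ≤ c y z) (hcs : ∀ y, ∑ z, c y z = 1)
    (hZpos : ∀ z, 0 < ∑ y, pY y * c y z)
    (α : ℝ) (hα : 1 < α) :
    (1 / (1 - α)) * Real.log (∑ y, pY y * ∑ x, a y x ^ α)
      ≤ (1 / (1 - α)) * Real.log (∑ z, (∑ y, pY y * c y z) *
          ∑ x, ((∑ y, pY y * c y z * a y x) / (∑ y, pY y * c y z)) ^ α) := by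
  set pZ : Z → ℝ := fun z => ∑ y, pY y * c y z with hpZdef
  have hYne : (Finset.univ : Finset Y).Nonempty := by
    by_contra h
    rw [Finset.not_nonempty_iff_eq_empty] at h
    simp [h] at hpYs
  obtain ⟨y0, _⟩ := hYne
  have hZne : (Finset.univ : Finset Z).Nonempty := by
    by_contra h
    rw [Finset.not_nonempty_iff_eq_empty] at h
    have := hcs y0
    simp [h] at this
  have hqnn : ∀ z x, 0 ≤ (∑ y, pY y * c y z * a y x) / pZ z := fun z x =>
    div_nonneg (Finset.sum_nonneg fun y _ =>
      mul_nonneg (mul_nonneg (hpY y) (hc y z)) (ha y x)) (hZpos z).le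
  have hqsum : ∀ z, ∑ x, (∑ y, pY y * c y z * a y x) / pZ z = 1 := by
    intro z
    rw [← Finset.sum_div, div_eq_one_iff_eq (hZpos z).ne', Finset.sum_comm]
    exact Finset.sum_congr rfl fun y _ => by rw [← Finset.mul_sum, has y, mul_one]
  -- convexity step
  have hkey : ∀ z x, ((∑ y, pY y * c y z * a y x) / pZ z) ^ α
      ≤ ∑ y, (pY y * c y z / pZ z) * (a y x) ^ α := by
    intro z x
    have h1 : (∑ y, pY y * c y z * a y x) / pZ z
        = ∑ y, (pY y * c y z / pZ z) * a y x := by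
      rw [Finset.sum_div]
      exact Finset.sum_congr rfl fun y _ => by ring
    rw [h1]
    refine Real.rpow_arith_mean_le_arith_mean_rpow _ _ _ (fun y _ =>
      div_nonneg (mul_nonneg (hpY y) (hc y z)) (hZpos z).le) ?_ (fun y _ => ha y x) hα.le
    rw [← Finset.sum_div, div_eq_one_iff_eq (hZpos z).ne']
  -- main sum inequality
  have hsum : (∑ z, pZ z * ∑ x, ((∑ y, pY y * c y z * a y x) / pZ z) ^ α)
      ≤ ∑ y, pY y * ∑ x, a y x ^ α := by
    calc ∑ z, pZ z * ∑ x, ((∑ y, pY y * c y z * a y x) / pZ z) ^ α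
        ≤ ∑ z, pZ z * ∑ x, ∑ y, (pY y * c y z / pZ z) * a y x ^ α :=
          Finset.sum_le_sum fun z _ => mul_le_mul_of_nonneg_left
            (Finset.sum_le_sum fun x _ => hkey z x) (hZpos z).le
      _ = ∑ z, ∑ y, pY y * c y z * ∑ x, a y x ^ α := by
          refine Finset.sum_congr rfl fun z _ => ?_
          rw [Finset.sum_comm, Finset.mul_sum]
          refine Finset.sum_congr rfl fun y _ => ?_
          rw [← Finset.mul_sum, ← mul_assoc]
          congr 1
          field_simp
          rw [mul_assoc]
          exact mul_div_cancel_left₀ _ (hZpos z).ne'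
      _ = ∑ y, pY y * ∑ x, a y x ^ α := by
          rw [Finset.sum_comm]
          refine Finset.sum_congr rfl fun y _ => ?_
          rw [← Finset.sum_mul, ← Finset.mul_sum, hcs y, mul_one]
  -- positivity of the Z-side sum
  have hSZ : 0 < ∑ z, pZ z * ∑ x, ((∑ y, pY y * c y z * a y x) / pZ z) ^ α := by
    refine Finset.sum_pos (fun z _ => ?_) hZne
    refine mul_pos (hZpos z) ?_
    have hex : ∃ x, 0 < (∑ y, pY y * c y z * a y x) / pZ z := by
      by_contra h
      push_neg at h
      have h0 : ∑ x, (∑ y, pY y * c y z * a y x) / pZ z ≤ 0 :=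
        Finset.sum_nonpos fun x _ => h x
      rw [hqsum z] at h0
      linarith
    obtain ⟨x0, hx0⟩ := hex
    exact Finset.sum_pos' (fun x _ => Real.rpow_nonneg (hqnn z x) α)
      ⟨x0, Finset.mem_univ x0, Real.rpow_pos_of_pos hx0 α⟩
  have hlog : Real.log (∑ z, pZ z * ∑ x, ((∑ y, pY y * c y z * a y x) / pZ z) ^ α)
      ≤ Real.log (∑ y, pY y * ∑ x, a y x ^ α) := Real.log_le_log hSZ hsum
  have hcoef : (1 : ℝ) / (1 - α) ≤ 0 :=
    (div_neg_of_pos_of_neg one_pos (by linarith)).le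
  exact mul_le_mul_of_nonpos_left hlog hcoef
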